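/- If two vertices belong to the same kite of a 1-kite-planar drawing, then they have the same level. -/

import Mathlib

open Set

/-- A straight-line drawing of a graph `G` in the plane: each vertex gets a distinct
position, and each edge is drawn as the straight-line segment between its endpoints. -/
structure SLDrawing (V : Type) (G : SimpleGraph V) where
  pos : V → ℝ × ℝ
  inj : Function.Injective pos

namespace SLDrawing

variable {V : Type} {G : SimpleGraph V}

/-- The segment of the plane representing an edge. -/
noncomputable def seg (D : SLDrawing V G) : Sym2 V → Set (ℝ × ℝ) :=
  Sym2.lift ⟨fun u v => segment ℝ (D.pos u) (D.pos v),
    fun u v => segment_symm ℝ (D.pos u) (D.pos v)⟩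

/-- The set of points of the plane occupied by the drawing. -/
def drawSet (D : SLDrawing V G) : Set (ℝ × ℝ) :=
  Set.range D.pos ∪ ⋃ e ∈ G.edgeSet, D.seg e

/-- The drawing is planar (crossing-free): edges pass through a vertex point only at their
endpoints, and two distinct edges meet only in common endpoints. -/
def IsPlanar (D : SLDrawing V G) : Prop :=
  (∀ e ∈ G.edgeSet, ∀ v : V, D.pos v ∈ D.seg e → v ∈ e) ∧
    ∀ e ∈ G.edgeSet, ∀ f ∈ G.edgeSet, e ≠ f →
      ∀ p, p ∈ D.seg e → p ∈ D.seg f → ∃ v : V, v ∈ e ∧ v ∈ f ∧ p = D.pos v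

/-- A face of the drawing: a connected component of the complement of the drawing. -/
def IsFace (D : SLDrawing V G) (F : Set (ℝ × ℝ)) : Prop :=
  ∃ p, p ∉ D.drawSet ∧ F = connectedComponentIn D.drawSetᶜ p

/-- The vertices incident to (i.e. on the boundary of) a face. -/
def faceVerts (D : SLDrawing V G) (F : Set (ℝ × ℝ)) : Set V :=
  {v | D.pos v ∈ closure F}

/-- The edges on the boundary of a face. -/
def faceEdges (D : SLDrawing V G) (F : Set (ℝ × ℝ)) : Set (Sym2 V) :=
  {e | e ∈ G.edgeSet ∧ D.seg e ⊆ closure F}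

/-- Two edges cross: they share a point that is not a vertex point. -/
def Crosses (D : SLDrawing V G) (e f : Sym2 V) : Prop :=
  e ≠ f ∧ ∃ p, p ∈ D.seg e ∧ p ∈ D.seg f ∧ ∀ v : V, p ≠ D.pos v

/-- An edge is uncrossed if it crosses no edge of the graph. -/
def Uncrossed (D : SLDrawing V G) (e : Sym2 V) : Prop :=
  ∀ f ∈ G.edgeSet, ¬ D.Crosses e f

end SLDrawing

/-- A graph is 3-connected: more than 3 vertices, and removing any
fewer than 3 vertices leaves it connected. -/
def ThreeConnected {V : Type} (G : SimpleGraph V) : Prop :=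
  4 ≤ Nat.card V ∧ ∀ S : Set V, S.ncard < 3 → (G.induce Sᶜ).Connected

namespace SLDrawing

variable {V : Type} {G : SimpleGraph V}

/-- `(a, b, c, d)` form a kite of the drawing: a drawing of `K₄` whose external cell is a
quadrilateral, i.e. all six edges are present, the edges `(a,c)` and `(b,d)` cross each
other, and (property P.2 of a 1-kite-planar drawing) the four kite edges `(a,b)`, `(b,c)`,
`(c,d)`, `(d,a)` are uncrossed. -/
def IsKite (D : SLDrawing V G) (a b c d : V) : Prop :=
  s(a, b) ∈ G.edgeSet ∧ s(b, c) ∈ G.edgeSet ∧ s(c, d) ∈ G.edgeSet ∧ s(d, a) ∈ G.edgeSet ∧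
  s(a, c) ∈ G.edgeSet ∧ s(b, d) ∈ G.edgeSet ∧
  D.Crosses s(a, c) s(b, d) ∧
  D.Uncrossed s(a, b) ∧ D.Uncrossed s(b, c) ∧ D.Uncrossed s(c, d) ∧ D.Uncrossed s(d, a)

/-- A vertex is inside a kite: its position lies strictly inside the quadrilateral
bounding the kite. -/
def InsideKite (D : SLDrawing V G) (a b c d v : V) : Prop :=
  D.pos v ∈ interior (convexHull ℝ (D.pos '' ({a, b, c, d} : Set V)))

end SLDrawing

namespace KiteGeo

lemma not_mem_interior_halfspace (m : ℝ × ℝ) (b : ℝ) (hm : m ≠ 0) (x : ℝ × ℝ)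
    (hx : m.1 * x.1 + m.2 * x.2 + b = 0) :
    x ∉ interior {y : ℝ × ℝ | 0 ≤ m.1 * y.1 + m.2 * y.2 + b} := by
  intro hint
  rw [mem_interior_iff_mem_nhds, Metric.mem_nhds_iff] at hint
  obtain ⟨ε, hε, hball⟩ := hint
  have hm' : m.1 ≠ 0 ∨ m.2 ≠ 0 := by
    by_contra h
    push_neg at h
    exact hm (Prod.ext h.1 h.2)
  have hmm : 0 < m.1 ^ 2 + m.2 ^ 2 := by
    rcases hm' with h | h
    · have : 0 < m.1 ^ 2 := by positivity
      nlinarith [sq_nonneg m.2]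
    · have : 0 < m.2 ^ 2 := by positivity
      nlinarith [sq_nonneg m.1]
  have ha1 := abs_nonneg m.1
  have ha2 := abs_nonneg m.2
  set M : ℝ := 2 * (|m.1| + |m.2|) + 1 with hMdef
  have hM : 0 < M := by positivity
  set δ : ℝ := ε / M with hδdef
  have hδ : 0 < δ := by positivity
  have hδM : δ * M = ε := by rw [hδdef]; field_simp
  have hmem : (x.1 - δ * m.1, x.2 - δ * m.2) ∈ Metric.ball x ε := by
    rw [Metric.mem_ball, Prod.dist_eq]
    have h1 : dist (x.1 - δ * m.1) x.1 = δ * |m.1| := by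
      rw [Real.dist_eq, show x.1 - δ * m.1 - x.1 = -(δ * m.1) by ring, abs_neg, abs_mul,
        abs_of_pos hδ]
    have h2 : dist (x.2 - δ * m.2) x.2 = δ * |m.2| := by
      rw [Real.dist_eq, show x.2 - δ * m.2 - x.2 = -(δ * m.2) by ring, abs_neg, abs_mul,
        abs_of_pos hδ]
    rw [max_lt_iff, h1, h2]
    constructor
    · nlinarith
    · nlinarith
  have := hball hmem
  simp only [mem_setOf_eq] at this
  have habs : m.1 * |m.1| ≤ m.1 ^ 2 := by
    rcases abs_cases m.1 with ⟨h, _⟩ | ⟨h, _⟩ <;> nlinarith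
  nlinarith [abs_mul_abs_self m.1, abs_mul_abs_self m.2]

end KiteGeo

namespace KiteGeo

lemma convex_hs (m : ℝ × ℝ) (b : ℝ) : Convex ℝ {y : ℝ × ℝ | 0 ≤ m.1 * y.1 + m.2 * y.2 + b} := by
  have : IsLinearMap ℝ (fun y : ℝ × ℝ => m.1 * y.1 + m.2 * y.2) := by
    constructor
    · intro p q; simp [Prod.fst_add, Prod.snd_add]; ring
    · intro c p; simp [Prod.smul_fst, Prod.smul_snd, smul_eq_mul]; ring
  have h := convex_halfSpace_ge this (-b)
  have heq : {y : ℝ × ℝ | 0 ≤ m.1 * y.1 + m.2 * y.2 + b} =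
      {w : ℝ × ℝ | -b ≤ m.1 * w.1 + m.2 * w.2} := by
    ext y
    simp only [mem_setOf_eq]
    constructor <;> intro <;> linarith
  rw [heq]; exact h

/-- If all four points lie in the halfspace and one is on the boundary line,
that one is not in the interior of the convex hull. -/
lemma not_interior_of_support (A B C D x : ℝ × ℝ) (m : ℝ × ℝ) (b : ℝ) (hm : m ≠ 0)
    (hA : 0 ≤ m.1 * A.1 + m.2 * A.2 + b) (hB : 0 ≤ m.1 * B.1 + m.2 * B.2 + b)
    (hC : 0 ≤ m.1 * C.1 + m.2 * C.2 + b) (hD : 0 ≤ m.1 * D.1 + m.2 * D.2 + b)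
    (hx : m.1 * x.1 + m.2 * x.2 + b = 0) :
    x ∉ interior (convexHull ℝ ({A, B, C, D} : Set (ℝ × ℝ))) := by
  intro hint
  have hsub : convexHull ℝ ({A, B, C, D} : Set (ℝ × ℝ)) ⊆
      {y : ℝ × ℝ | 0 ≤ m.1 * y.1 + m.2 * y.2 + b} := by
    apply convexHull_min _ (convex_hs m b)
    intro y hy
    simp only [mem_insert_iff, mem_singleton_iff] at hy
    rcases hy with rfl | rfl | rfl | rfl <;> assumption
  exact not_mem_interior_halfspace m b hm x hx (interior_mono hsub hint)

/-- If all four points are on a common line, the hull has empty interior. -/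
lemma not_interior_of_line (A B C D x : ℝ × ℝ) (m : ℝ × ℝ) (b : ℝ) (hm : m ≠ 0)
    (hA : m.1 * A.1 + m.2 * A.2 + b = 0) (hB : m.1 * B.1 + m.2 * B.2 + b = 0)
    (hC : m.1 * C.1 + m.2 * C.2 + b = 0) (hD : m.1 * D.1 + m.2 * D.2 + b = 0) :
    x ∉ interior (convexHull ℝ ({A, B, C, D} : Set (ℝ × ℝ))) := by
  intro hint
  have hsub : convexHull ℝ ({A, B, C, D} : Set (ℝ × ℝ)) ⊆
      {y : ℝ × ℝ | 0 ≤ m.1 * y.1 + m.2 * y.2 + b} := by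
    apply convexHull_min _ (convex_hs m b)
    intro y hy
    simp only [mem_insert_iff, mem_singleton_iff] at hy
    rcases hy with rfl | rfl | rfl | rfl <;> simp only [mem_setOf_eq] <;> linarith
  have hsub2 : convexHull ℝ ({A, B, C, D} : Set (ℝ × ℝ)) ⊆
      {y : ℝ × ℝ | 0 ≤ (-m).1 * y.1 + (-m).2 * y.2 + (-b)} := by
    apply convexHull_min _ (convex_hs (-m) (-b))
    intro y hy
    simp only [mem_insert_iff, mem_singleton_iff, Prod.fst_neg, Prod.snd_neg] at hy ⊢
    rcases hy with rfl | rfl | rfl | rfl <;> simp only [mem_setOf_eq] <;> linarith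
  have hxline : m.1 * x.1 + m.2 * x.2 + b = 0 := by
    have h1 := hsub (interior_subset hint)
    have h2 := hsub2 (interior_subset hint)
    simp only [mem_setOf_eq, Prod.fst_neg, Prod.snd_neg] at h1 h2
    linarith
  exact not_mem_interior_halfspace m b hm x hxline (interior_mono hsub hint)

end KiteGeo

namespace KiteGeo

/-- Configuration: quadrilateral A B C D whose diagonals AC and BD cross at an
interior point of both, with full-dimensional hull and distinct vertices. -/
structure XConfig (A B C D : ℝ × ℝ) (s t : ℝ) : Prop where
  hs0 : 0 < s
  hs1 : s < 1
  ht0 : 0 < t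
  ht1 : t < 1
  hcr : (1 - s) • A + s • C = (1 - t) • B + t • D
  hne : (interior (convexHull ℝ ({A, B, C, D} : Set (ℝ × ℝ)))).Nonempty
  hAB : A ≠ B
  hBC : B ≠ C
  hCD : C ≠ D
  hDA : D ≠ A
  hAC : A ≠ C
  hBD : B ≠ D

lemma quad_rot {A B C D : ℝ × ℝ} {s t : ℝ} (K : XConfig A B C D s t) :
    XConfig B C D A t (1 - s) := by
  have hset : ({B, C, D, A} : Set (ℝ × ℝ)) = {A, B, C, D} := by
    ext x; simp only [mem_insert_iff, mem_singleton_iff]; tauto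
  refine ⟨K.ht0, K.ht1, by linarith [K.hs1], by linarith [K.hs0], ?_, ?_, K.hBC, K.hCD,
    K.hDA, K.hAB, K.hBD, (Ne.symm K.hAC)⟩
  · rw [show (1 : ℝ) - (1 - s) = s by ring, ← K.hcr]; abel
  · rw [hset]; exact K.hne

/-- hcr in coordinates -/
lemma hcr1 {A B C D : ℝ × ℝ} {s t : ℝ} (K : XConfig A B C D s t) :
    (1 - s) * A.1 + s * C.1 = (1 - t) * B.1 + t * D.1 := by
  have := congrArg Prod.fst K.hcr
  simpa [Prod.smul_fst, Prod.fst_add] using this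

lemma hcr2 {A B C D : ℝ × ℝ} {s t : ℝ} (K : XConfig A B C D s t) :
    (1 - s) * A.2 + s * C.2 = (1 - t) * B.2 + t * D.2 := by
  have := congrArg Prod.snd K.hcr
  simpa [Prod.smul_snd, Prod.snd_add] using this

/-- C and D lie strictly on the same side of line AB. -/
lemma sameSide_AB {A B C D : ℝ × ℝ} {s t : ℝ} (K : XConfig A B C D s t) :
    0 < ((B.1 - A.1) * (C.2 - A.2) - (B.2 - A.2) * (C.1 - A.1)) *
        ((B.1 - A.1) * (D.2 - A.2) - (B.2 - A.2) * (D.1 - A.1)) := by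
  set c3 : ℝ := (B.1 - A.1) * (C.2 - A.2) - (B.2 - A.2) * (C.1 - A.1) with hc3
  set c4 : ℝ := (B.1 - A.1) * (D.2 - A.2) - (B.2 - A.2) * (D.1 - A.1) with hc4
  have hrel : s * c3 = t * c4 := by
    rw [hc3, hc4]
    linear_combination (B.1 - A.1) * (hcr2 K) - (B.2 - A.2) * (hcr1 K)
  have hc3ne : c3 ≠ 0 := by
    intro h0
    have hc40 : c4 = 0 := by
      have := hrel; rw [h0] at this
      have ht := K.ht0
      nlinarith
    -- all four points on line AB : functional m = (-(B.2-A.2), B.1-A.1), b = ...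
    obtain ⟨x, hx⟩ := K.hne
    refine not_interior_of_line A B C D x (-(B.2 - A.2), B.1 - A.1)
      ((B.2 - A.2) * A.1 - (B.1 - A.1) * A.2) ?_ (by ring) (by ring)
      (by simp only; linear_combination h0) (by simp only; linear_combination hc40) hx
    intro hm0
    have h1 : B.2 - A.2 = 0 := by
      have := congrArg Prod.fst hm0; simp at this; linarith
    have h2 : B.1 - A.1 = 0 := by
      have := congrArg Prod.snd hm0; simp at this; linarith
    exact K.hAB (Prod.ext (by linarith) (by linarith))
  have hc4ne : c4 ≠ 0 := by
    intro h0
    apply hc3ne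
    have := hrel; rw [h0] at this
    have hs := K.hs0
    nlinarith
  rcases lt_or_gt_of_ne hc3ne with h3 | h3 <;> rcases lt_or_gt_of_ne hc4ne with h4 | h4
  · exact mul_pos_of_neg_of_neg h3 h4
  · nlinarith [K.hs0, K.ht0]
  · nlinarith [K.hs0, K.ht0]
  · exact mul_pos h3 h4

end KiteGeo

namespace KiteGeo

lemma set_rot (A B C D : ℝ × ℝ) : ({B, C, D, A} : Set (ℝ × ℝ)) = {A, B, C, D} := by
  ext x; simp only [mem_insert_iff, mem_singleton_iff]; tauto

lemma notintA {A B C D : ℝ × ℝ} {s t : ℝ} (K : XConfig A B C D s t) :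
    A ∉ interior (convexHull ℝ ({A, B, C, D} : Set (ℝ × ℝ))) := by
  have hss := sameSide_AB K
  set c3 : ℝ := (B.1 - A.1) * (C.2 - A.2) - (B.2 - A.2) * (C.1 - A.1) with hc3
  set c4 : ℝ := (B.1 - A.1) * (D.2 - A.2) - (B.2 - A.2) * (D.1 - A.1) with hc4
  have hc3ne : c3 ≠ 0 := by intro h; rw [h] at hss; simp at hss
  set bb : ℝ := c3 * ((B.2 - A.2) * A.1 - (B.1 - A.1) * A.2) with hbb
  have hvC : 0 ≤ c3 * -(B.2 - A.2) * C.1 + c3 * (B.1 - A.1) * C.2 + bb := by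
    have h : c3 * -(B.2 - A.2) * C.1 + c3 * (B.1 - A.1) * C.2 + bb = c3 * c3 := by
      rw [hbb, hc3]; ring
    rw [h]; exact mul_self_nonneg c3
  have hvD : 0 ≤ c3 * -(B.2 - A.2) * D.1 + c3 * (B.1 - A.1) * D.2 + bb := by
    have h : c3 * -(B.2 - A.2) * D.1 + c3 * (B.1 - A.1) * D.2 + bb = c3 * c4 := by
      rw [hbb, hc3, hc4]; ring
    rw [h]; exact hss.le
  refine not_interior_of_support A B C D A (c3 * (-(B.2 - A.2)), c3 * (B.1 - A.1)) bb
    ?_ (by simp only; rw [hbb]; ring_nf; nlinarith [hbb]) (by simp only; rw [hbb]; nlinarith)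
    (by simpa using hvC) (by simpa using hvD) (by simp only; rw [hbb]; ring)
  intro hm0
  have h1 := congrArg Prod.fst hm0
  have h2 := congrArg Prod.snd hm0
  simp only [Prod.fst_zero, Prod.snd_zero] at h1 h2
  have hB1 : B.1 - A.1 = 0 := by
    rcases mul_eq_zero.mp h2 with h | h
    · exact absurd h hc3ne
    · exact h
  have hB2 : B.2 - A.2 = 0 := by
    rcases mul_eq_zero.mp h1 with h | h
    · exact absurd h hc3ne
    · linarith
  exact K.hAB (Prod.ext (by linarith) (by linarith))

lemma vertex_not_interior {A B C D : ℝ × ℝ} {s t : ℝ} (K : XConfig A B C D s t) :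
    A ∉ interior (convexHull ℝ ({A, B, C, D} : Set (ℝ × ℝ))) ∧
    B ∉ interior (convexHull ℝ ({A, B, C, D} : Set (ℝ × ℝ))) ∧
    C ∉ interior (convexHull ℝ ({A, B, C, D} : Set (ℝ × ℝ))) ∧
    D ∉ interior (convexHull ℝ ({A, B, C, D} : Set (ℝ × ℝ))) := by
  have h1 := notintA K
  have h2 := notintA (quad_rot K)
  have h3 := notintA (quad_rot (quad_rot K))
  have h4 := notintA (quad_rot (quad_rot (quad_rot K)))
  rw [set_rot] at h2
  rw [set_rot, set_rot] at h3
  rw [set_rot, set_rot, set_rot] at h4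
  exact ⟨h1, h2, h3, h4⟩

end KiteGeo

namespace KiteGeo

/-- A convex combination with all-positive weights lies in the interior of the hull. -/
lemma pos_combo_interior {A B C D : ℝ × ℝ} {s t : ℝ} (K : XConfig A B C D s t)
    {wA wB wC wD : ℝ} (hwA : 0 < wA) (hwB : 0 < wB) (hwC : 0 < wC) (hwD : 0 < wD)
    (hsum : wA + wB + wC + wD = 1) :
    wA • A + wB • B + wC • C + wD • D ∈
      interior (convexHull ℝ ({A, B, C, D} : Set (ℝ × ℝ))) := by
  classical
  set Q : Set (ℝ × ℝ) := convexHull ℝ ({A, B, C, D} : Set (ℝ × ℝ)) with hQ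
  have hss := sameSide_AB K
  set Δ : ℝ := (B.1 - A.1) * (C.2 - A.2) - (B.2 - A.2) * (C.1 - A.1) with hΔ
  have hΔne : Δ ≠ 0 := by intro h; rw [h] at hss; simp at hss
  set u : ℝ × ℝ → ℝ := fun x => ((x.1 - A.1) * (C.2 - A.2) - (x.2 - A.2) * (C.1 - A.1)) / Δ
    with hu
  set v : ℝ × ℝ → ℝ := fun x => ((B.1 - A.1) * (x.2 - A.2) - (B.2 - A.2) * (x.1 - A.1)) / Δ
    with hv
  have hcu : Continuous u := by rw [hu]; fun_prop
  have hcv : Continuous v := by rw [hv]; fun_prop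
  set O : Set (ℝ × ℝ) := {x | 0 < u x ∧ 0 < v x ∧ u x + v x < 1} with hO
  have hOopen : IsOpen O := by
    rw [hO]
    have h1 : IsOpen {x : ℝ × ℝ | 0 < u x} := isOpen_lt continuous_const hcu
    have h2 : IsOpen {x : ℝ × ℝ | 0 < v x} := isOpen_lt continuous_const hcv
    have h3 : IsOpen {x : ℝ × ℝ | u x + v x < 1} := isOpen_lt (hcu.add hcv) continuous_const
    have heq : {x : ℝ × ℝ | 0 < u x ∧ 0 < v x ∧ u x + v x < 1} =
        ({x : ℝ × ℝ | 0 < u x} ∩ {x : ℝ × ℝ | 0 < v x}) ∩ {x : ℝ × ℝ | u x + v x < 1} := by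
      ext x; simp only [mem_setOf_eq, mem_inter_iff]; tauto
    rw [heq]; exact (h1.inter h2).inter h3
  -- O is contained in the hull
  have hAQ : A ∈ Q := subset_convexHull ℝ _ (by simp)
  have hBQ : B ∈ Q := subset_convexHull ℝ _ (by simp)
  have hCQ : C ∈ Q := subset_convexHull ℝ _ (by simp)
  have hDQ : D ∈ Q := subset_convexHull ℝ _ (by simp)
  have hQconv : Convex ℝ Q := convex_convexHull ℝ _
  have hOQ : O ⊆ Q := by
    intro x hx
    obtain ⟨hux, hvx, huv⟩ := hx
    have hid : x = (1 - u x - v x) • A + u x • B + v x • C := by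
      have h1 : x.1 = (1 - u x - v x) * A.1 + u x * B.1 + v x * C.1 := by
        rw [hu, hv]; field_simp; ring
      have h2 : x.2 = (1 - u x - v x) * A.2 + u x * B.2 + v x * C.2 := by
        rw [hu, hv]; field_simp; ring
      apply Prod.ext <;>
        simp only [Prod.fst_add, Prod.snd_add, Prod.smul_fst, Prod.smul_snd, smul_eq_mul]
      · exact h1
      · exact h2
    rw [hid]
    set w : ℝ × ℝ := (u x / (u x + v x)) • B + (v x / (u x + v x)) • C with hw
    have huvpos : 0 < u x + v x := by linarith
    have hwseg : w ∈ Q := hQconv.segment_subset hBQ hCQ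
      ⟨u x / (u x + v x), v x / (u x + v x), by positivity, by positivity,
        by field_simp, rfl⟩
    have hcomb : (1 - u x - v x) • A + u x • B + v x • C
        = (1 - (u x + v x)) • A + (u x + v x) • w := by
      rw [hw, smul_add, smul_smul, smul_smul]
      rw [mul_div_cancel₀ _ (ne_of_gt huvpos), mul_div_cancel₀ _ (ne_of_gt huvpos)]
      module
    rw [hcomb]
    exact hQconv.segment_subset hAQ hwseg
      ⟨1 - (u x + v x), u x + v x, by linarith, by linarith, by ring, rfl⟩
  have hOint : O ⊆ interior Q := interior_maximal hOQ hOopen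
  -- the renormalized point r
  have hc : (0:ℝ) < wA + wB + wC := by linarith
  set r : ℝ × ℝ := ((wA / (wA + wB + wC)) • A + (wB / (wA + wB + wC)) • B
      + (wC / (wA + wB + wC)) • C) with hr
  have hur : u r = wB / (wA + wB + wC) := by
    rw [hu, hr]
    simp only [Prod.fst_add, Prod.snd_add, Prod.smul_fst, Prod.smul_snd, smul_eq_mul]
    field_simp
    ring
  have hvr : v r = wC / (wA + wB + wC) := by
    rw [hv, hr]
    simp only [Prod.fst_add, Prod.snd_add, Prod.smul_fst, Prod.smul_snd, smul_eq_mul]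
    field_simp
    ring
  have hrO : r ∈ O := by
    refine ⟨?_, ?_, ?_⟩
    · rw [hur]; positivity
    · rw [hvr]; positivity
    · rw [hur, hvr]
      rw [← add_div, div_lt_one hc]
      linarith
  have hfin : wA • A + wB • B + wC • C + wD • D = (wA + wB + wC) • r + wD • D := by
    rw [hr, smul_add, smul_add, smul_smul, smul_smul, smul_smul]
    rw [mul_div_cancel₀ _ (ne_of_gt hc), mul_div_cancel₀ _ (ne_of_gt hc),
      mul_div_cancel₀ _ (ne_of_gt hc)]
  rw [hfin]
  exact hQconv.combo_interior_closure_mem_interior (hOint hrO)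
    (subset_closure hDQ) hc hwD.le (by linarith)

end KiteGeo

namespace KiteGeo

lemma crossPt_interior {A B C D : ℝ × ℝ} {s t : ℝ} (K : XConfig A B C D s t) :
    (1 - s) • A + s • C ∈ interior (convexHull ℝ ({A, B, C, D} : Set (ℝ × ℝ))) := by
  have h := pos_combo_interior K (wA := (1 - s) / 2) (wB := (1 - t) / 2) (wC := s / 2)
    (wD := t / 2) (by linarith [K.hs1]) (by linarith [K.ht1]) (by linarith [K.hs0])
    (by linarith [K.ht0]) (by ring)
  have hid : ((1 - s) / 2) • A + ((1 - t) / 2) • B + (s / 2) • C + (t / 2) • D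
      = (1 - s) • A + s • C := by
    have h2 : ((1:ℝ)/2) • ((1 - s) • A + s • C) + ((1:ℝ)/2) • ((1 - t) • B + t • D)
        = ((1 - s) / 2) • A + ((1 - t) / 2) • B + (s / 2) • C + (t / 2) • D := by
      module
    rw [← h2, ← K.hcr]
    module
  rwa [hid] at h

/-- step lemma: a nonnegative combination of two hull points and an interior point is
on the segment or in the interior. -/
lemma step_lemma {Q : Set (ℝ × ℝ)} (hQconv : Convex ℝ Q) {X Y P q : ℝ × ℝ}
    (hP : P ∈ interior Q) (hX : X ∈ Q) (hY : Y ∈ Q)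
    {cX cY z : ℝ} (hcX : 0 ≤ cX) (hcY : 0 ≤ cY) (hz : 0 ≤ z) (hsum : cX + cY + z = 1)
    (hq : q = cX • X + cY • Y + z • P) :
    q ∈ segment ℝ X Y ∨ q ∈ interior Q := by
  rcases eq_or_lt_of_le hz with hz0 | hzpos
  · left
    refine ⟨cX, cY, hcX, hcY, by linarith, ?_⟩
    rw [hq, ← hz0]
    module
  · right
    rcases eq_or_lt_of_le (by linarith : (0:ℝ) ≤ cX + cY) with hc0 | hcpos
    · have hX0 : cX = 0 := by linarith
      have hY0 : cY = 0 := by linarith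
      have hz1 : z = 1 := by linarith
      rw [hq, hX0, hY0, hz1]
      simpa using hP
    · set c : ℝ := cX + cY with hcdef
      set r : ℝ × ℝ := (cX / c) • X + (cY / c) • Y with hr
      have hrseg : r ∈ Q := hQconv.segment_subset hX hY
        ⟨cX / c, cY / c, by positivity, by positivity, by field_simp; exact hcdef.symm, rfl⟩
      have hqr : q = z • P + c • r := by
        rw [hq, hr, smul_add, smul_smul, smul_smul,
          mul_div_cancel₀ _ (ne_of_gt hcpos), mul_div_cancel₀ _ (ne_of_gt hcpos)]
        module
      rw [hqr]
      exact hQconv.combo_interior_closure_mem_interior hP (subset_closure hrseg)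
        hzpos (le_of_lt hcpos) (by linarith)

end KiteGeo

namespace KiteGeo

lemma exists_weights {A B C D q : ℝ × ℝ} {s t : ℝ} (K : XConfig A B C D s t)
    (hq : q ∈ convexHull ℝ ({A, B, C, D} : Set (ℝ × ℝ))) :
    ∃ wA wB wC wD : ℝ, 0 ≤ wA ∧ 0 ≤ wB ∧ 0 ≤ wC ∧ 0 ≤ wD ∧ wA + wB + wC + wD = 1 ∧
      q = wA • A + wB • B + wC • C + wD • D := by
  classical
  have hcoe : ({A, B, C, D} : Set (ℝ × ℝ)) = (↑({A, B, C, D} : Finset (ℝ × ℝ)) : Set (ℝ × ℝ)) := by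
    simp
  rw [hcoe, Finset.convexHull_eq] at hq
  obtain ⟨w, hw0, hw1, hwq⟩ := hq
  rw [Finset.centerMass_eq_of_sum_1 _ _ hw1] at hwq
  have hBn : B ∉ ({C, D} : Finset (ℝ × ℝ)) := by
    simp only [Finset.mem_insert, Finset.mem_singleton]
    push_neg
    exact ⟨K.hBC, K.hBD⟩
  have hAn : A ∉ ({B, C, D} : Finset (ℝ × ℝ)) := by
    simp only [Finset.mem_insert, Finset.mem_singleton]
    push_neg
    exact ⟨K.hAB, K.hAC, fun h => K.hDA h.symm⟩
  have hCn : C ∉ ({D} : Finset (ℝ × ℝ)) := by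
    simp only [Finset.mem_singleton]
    exact K.hCD
  refine ⟨w A, w B, w C, w D, ?_, ?_, ?_, ?_, ?_, ?_⟩
  · exact hw0 A (by simp)
  · exact hw0 B (by simp)
  · exact hw0 C (by simp)
  · exact hw0 D (by simp)
  · rw [Finset.sum_insert hAn, Finset.sum_insert hBn, Finset.sum_insert hCn,
      Finset.sum_singleton] at hw1
    linarith
  · rw [Finset.sum_insert hAn, Finset.sum_insert hBn, Finset.sum_insert hCn,
      Finset.sum_singleton] at hwq
    rw [← hwq]
    simp only [id]
    abel

end KiteGeo

namespace KiteGeo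

lemma case1 {A B C D q : ℝ × ℝ} {s t : ℝ} (K : XConfig A B C D s t)
    {wA wB wC wD : ℝ} (hwA : 0 ≤ wA) (hwB : 0 ≤ wB) (hwC : 0 ≤ wC) (hwD : 0 ≤ wD)
    (hsum : wA + wB + wC + wD = 1)
    (hq : q = wA • A + wB • B + wC • C + wD • D)
    (hlam : 0 ≤ wA * s - wC * (1 - s)) (hmu : 0 ≤ wB * t - wD * (1 - t)) :
    q ∈ segment ℝ A B ∨ q ∈ interior (convexHull ℝ ({A, B, C, D} : Set (ℝ × ℝ))) := by
  have hs0 := K.hs0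
  have hs1 := K.hs1
  have ht0 := K.ht0
  have ht1 := K.ht1
  have hc1 := hcr1 K
  have hc2 := hcr2 K
  set P : ℝ × ℝ := (1 - s) • A + s • C with hP
  have hPint := crossPt_interior K
  set cX : ℝ := (wA * s - wC * (1 - s)) / s with hcX
  set cY : ℝ := (wB * t - wD * (1 - t)) / t with hcY
  set z : ℝ := wC / s + wD / t with hz
  have hsum' : cX + cY + z = 1 := by
    have h : cX + cY + z = wA + wB + wC + wD := by
      rw [hcX, hcY, hz]
      field_simp
      ring
    rw [h, hsum]
  have hqid : q = cX • A + cY • B + z • P := by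
    rw [hq, hcX, hcY, hz, hP]
    have e1 : (wA • A + wB • B + wC • C + wD • D).1 =
        (((wA * s - wC * (1 - s)) / s) • A + ((wB * t - wD * (1 - t)) / t) • B
          + (wC / s + wD / t) • ((1 - s) • A + s • C)).1 := by
      simp only [Prod.fst_add, Prod.smul_fst, smul_eq_mul]
      field_simp
      linear_combination (-(wD * s)) * hc1
    have e2 : (wA • A + wB • B + wC • C + wD • D).2 =
        (((wA * s - wC * (1 - s)) / s) • A + ((wB * t - wD * (1 - t)) / t) • B
          + (wC / s + wD / t) • ((1 - s) • A + s • C)).2 := by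
      simp only [Prod.snd_add, Prod.smul_snd, smul_eq_mul]
      field_simp
      linear_combination (-(wD * s)) * hc2
    exact Prod.ext e1 e2
  exact step_lemma (convex_convexHull ℝ _) hPint
    (subset_convexHull ℝ _ (by simp)) (subset_convexHull ℝ _ (by simp))
    (by rw [hcX]; positivity) (by rw [hcY]; positivity) (by rw [hz]; positivity)
    hsum' hqid

end KiteGeo

namespace KiteGeo

/-- Main geometric lemma: the frontier of the quadrilateral is covered by its four sides. -/
lemma frontier_subset_sides {A B C D : ℝ × ℝ} {s t : ℝ} (K : XConfig A B C D s t) :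
    frontier (convexHull ℝ ({A, B, C, D} : Set (ℝ × ℝ))) ⊆
      segment ℝ A B ∪ segment ℝ B C ∪ segment ℝ C D ∪ segment ℝ D A := by
  intro q hqf
  have hQclosed : IsClosed (convexHull ℝ ({A, B, C, D} : Set (ℝ × ℝ))) :=
    (((Set.finite_singleton D).insert C |>.insert B |>.insert A).isCompact_convexHull ℝ).isClosed
  rw [hQclosed.frontier_eq] at hqf
  obtain ⟨hqQ, hqni⟩ := hqf
  obtain ⟨wA, wB, wC, wD, hwA, hwB, hwC, hwD, hsum, hq⟩ := exists_weights K hqQ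
  have K1 := quad_rot K
  have K2 := quad_rot K1
  have K3 := quad_rot K2
  have hrot1 : ({B, C, D, A} : Set (ℝ × ℝ)) = {A, B, C, D} := set_rot A B C D
  have hrot2 : ({C, D, A, B} : Set (ℝ × ℝ)) = {A, B, C, D} := by
    rw [set_rot B C D A, set_rot A B C D]
  have hrot3 : ({D, A, B, C} : Set (ℝ × ℝ)) = {A, B, C, D} := by
    rw [set_rot C D A B, hrot2]
  rcases le_or_gt 0 (wA * s - wC * (1 - s)) with hlam | hlam <;>
    rcases le_or_gt 0 (wB * t - wD * (1 - t)) with hmu | hmu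
  · rcases case1 K hwA hwB hwC hwD hsum hq hlam hmu with h | h
    · exact Or.inl (Or.inl (Or.inl h))
    · exact absurd h hqni
  · -- λ ≥ 0, μ ≤ 0 : use K3 = (D, A, B, C, 1-t, s)
    have h := case1 K3 hwD hwA hwB hwC (by linarith)
      (show q = wD • D + wA • A + wB • B + wC • C by rw [hq]; module)
      (by linarith) (by linarith)
    rw [hrot3] at h
    rcases h with h | h
    · exact Or.inr h
    · exact absurd h hqni
  · -- λ ≤ 0, μ ≥ 0 : use K1 = (B, C, D, A, t, 1-s)
    have h := case1 K1 hwB hwC hwD hwA (by linarith)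
      (show q = wB • B + wC • C + wD • D + wA • A by rw [hq]; module)
      (by linarith) (by linarith)
    rw [hrot1] at h
    rcases h with h | h
    · exact Or.inl (Or.inl (Or.inr h))
    · exact absurd h hqni
  · -- λ ≤ 0, μ ≤ 0 : use K2 = (C, D, A, B, 1-s, 1-t)
    have h := case1 K2 hwC hwD hwA hwB (by linarith)
      (show q = wC • C + wD • D + wA • A + wB • B by rw [hq]; module)
      (by linarith) (by linarith)
    rw [hrot2] at h
    rcases h with h | h
    · exact Or.inl (Or.inr h)
    · exact absurd h hqni

end KiteGeo

namespace KiteGeo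

/-- A segment from an interior point to a non-interior point meets the frontier. -/
lemma segment_meets_frontier {S : Set (ℝ × ℝ)} (hS : IsClosed S) {x y : ℝ × ℝ}
    (hx : x ∈ interior S) (hy : y ∉ interior S) :
    ∃ p ∈ segment ℝ x y, p ∈ frontier S := by
  by_cases hyS : y ∈ S
  · exact ⟨y, right_mem_segment ℝ x y, by rw [hS.frontier_eq]; exact ⟨hyS, hy⟩⟩
  · set γ : ℝ → ℝ × ℝ := fun θ => (1 - θ) • x + θ • y with hγ
    have hγc : Continuous γ := by rw [hγ]; fun_prop
    set T : Set ℝ := Icc (0:ℝ) 1 ∩ γ ⁻¹' S with hT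
    have hTclosed : IsClosed T := isClosed_Icc.inter (hS.preimage hγc)
    have h0T : (0:ℝ) ∈ T := by
      constructor
      · exact ⟨le_refl 0, zero_le_one⟩
      · simp only [mem_preimage, hγ]
        norm_num
        exact interior_subset hx
    have hbdd : BddAbove T := BddAbove.mono (inter_subset_left) bddAbove_Icc
    set θ0 : ℝ := sSup T with hθ0
    have hθ0T : θ0 ∈ T := hTclosed.csSup_mem ⟨0, h0T⟩ hbdd
    have hθ01 : θ0 ∈ Icc (0:ℝ) 1 := hθ0T.1
    have hγθ0S : γ θ0 ∈ S := hθ0T.2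
    have hθ0lt1 : θ0 < 1 := by
      rcases lt_or_eq_of_le hθ01.2 with h | h
      · exact h
      · exfalso
        apply hyS
        have : γ θ0 = y := by rw [hγ, h]; norm_num
        rwa [this] at hγθ0S
    refine ⟨γ θ0, ⟨1 - θ0, θ0, by linarith [hθ01.2], hθ01.1, by ring, rfl⟩, ?_⟩
    rw [hS.frontier_eq]
    refine ⟨hγθ0S, ?_⟩
    intro hint
    have hopen : IsOpen (γ ⁻¹' interior S) := isOpen_interior.preimage hγc
    rw [Metric.isOpen_iff] at hopen
    obtain ⟨ε, hε, hball⟩ := hopen θ0 hint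
    set θ1 : ℝ := min (θ0 + ε / 2) ((θ0 + 1) / 2) with hθ1
    have hθ1gt : θ0 < θ1 := by
      apply lt_min <;> linarith
    have hθ1mem : θ1 ∈ Metric.ball θ0 ε := by
      rw [Metric.mem_ball, Real.dist_eq, abs_of_pos (by linarith)]
      calc θ1 - θ0 ≤ θ0 + ε / 2 - θ0 := by
            have := min_le_left (θ0 + ε / 2) ((θ0 + 1) / 2); linarith
        _ < ε := by linarith
    have hθ1T : θ1 ∈ T := by
      refine ⟨⟨by linarith [hθ01.1], ?_⟩, ?_⟩
      · have := min_le_right (θ0 + ε / 2) ((θ0 + 1) / 2)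
        linarith
      · have h1 : γ θ1 ∈ interior S := hball hθ1mem
        exact mem_preimage.mpr (interior_subset h1)
    have := le_csSup hbdd hθ1T
    rw [← hθ0] at this
    linarith

end KiteGeo



namespace SLDrawing

variable {V : Type} {G : SimpleGraph V} (D : SLDrawing V G)

lemma seg_eq (u v : V) : D.seg s(u, v) = segment ℝ (D.pos u) (D.pos v) := by
  simp [SLDrawing.seg]

lemma crosses_symm {e f : Sym2 V} (h : D.Crosses e f) : D.Crosses f e := by
  obtain ⟨hne, p, h1, h2, h3⟩ := h
  exact ⟨hne.symm, p, h2, h1, h3⟩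

lemma image_quad (a b c d : V) :
    D.pos '' ({a, b, c, d} : Set V) = {D.pos a, D.pos b, D.pos c, D.pos d} := by
  simp [Set.image_insert_eq]

lemma kite_rot {a b c d : V} (hK : D.IsKite a b c d) : D.IsKite b c d a := by
  obtain ⟨e1, e2, e3, e4, e5, e6, hcr, u1, u2, u3, u4⟩ := hK
  refine ⟨e2, e3, e4, e1, e6, ?_, ?_, u2, u3, u4, u1⟩
  · rw [Sym2.eq_swap]; exact e5
  · rw [Sym2.eq_swap (a := c) (b := a)]
    exact D.crosses_symm hcr

lemma insideKite_rot {a b c d v : V} (h : D.InsideKite a b c d v) :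
    D.InsideKite b c d a v := by
  unfold InsideKite at h ⊢
  have : ({b, c, d, a} : Set V) = {a, b, c, d} := by
    ext x; simp only [Set.mem_insert_iff, Set.mem_singleton_iff]; tauto
  rwa [this]

lemma kite_cfg {a b c d : V} (hK : D.IsKite a b c d)
    (hfull : (interior (convexHull ℝ
      ({D.pos a, D.pos b, D.pos c, D.pos d} : Set (ℝ × ℝ)))).Nonempty) :
    ∃ s t : ℝ, KiteGeo.XConfig (D.pos a) (D.pos b) (D.pos c) (D.pos d) s t := by
  obtain ⟨e1, e2, e3, e4, e5, e6, hcr, -, -, -, -⟩ := hK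
  have hab : a ≠ b := (G.mem_edgeSet.mp e1).ne
  have hbc : b ≠ c := (G.mem_edgeSet.mp e2).ne
  have hcd : c ≠ d := (G.mem_edgeSet.mp e3).ne
  have hda : d ≠ a := (G.mem_edgeSet.mp e4).ne
  have hac : a ≠ c := (G.mem_edgeSet.mp e5).ne
  have hbd : b ≠ d := (G.mem_edgeSet.mp e6).ne
  obtain ⟨-, p, hp1, hp2, hp3⟩ := hcr
  rw [D.seg_eq] at hp1 hp2
  obtain ⟨α, β, hα, hβ, hαβ, hp⟩ := hp1
  obtain ⟨γ, δ, hγ, hδ, hγδ, hq⟩ := hp2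
  have hβ0 : β ≠ 0 := by
    intro h
    apply hp3 a
    rw [← hp, h]
    have : α = 1 := by linarith
    rw [this]
    simp
  have hβ1 : β ≠ 1 := by
    intro h
    apply hp3 c
    rw [← hp, h]
    have : α = 0 := by linarith
    rw [this]
    simp
  have hδ0 : δ ≠ 0 := by
    intro h
    apply hp3 b
    rw [← hq, h]
    have : γ = 1 := by linarith
    rw [this]
    simp
  have hδ1 : δ ≠ 1 := by
    intro h
    apply hp3 d
    rw [← hq, h]
    have : γ = 0 := by linarith
    rw [this]
    simp
  refine ⟨β, δ, lt_of_le_of_ne hβ (Ne.symm hβ0), lt_of_le_of_ne (by linarith) hβ1,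
    lt_of_le_of_ne hδ (Ne.symm hδ0), lt_of_le_of_ne (by linarith) hδ1, ?_, hfull,
    fun h => hab (D.inj h), fun h => hbc (D.inj h), fun h => hcd (D.inj h),
    fun h => hda (D.inj h), fun h => hac (D.inj h), fun h => hbd (D.inj h)⟩
  have hα' : α = 1 - β := by linarith
  have hγ' : γ = 1 - δ := by linarith
  rw [← hα', ← hγ', hp, hq]

lemma vertex_not_inside {a b c d : V} (hK : D.IsKite a b c d) {w : V}
    (hw : w ∈ ({a, b, c, d} : Set V)) : ¬ D.InsideKite a b c d w := by
  intro hin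
  unfold InsideKite at hin
  rw [D.image_quad] at hin
  obtain ⟨s, t, K⟩ := D.kite_cfg hK ⟨_, hin⟩
  obtain ⟨h1, h2, h3, h4⟩ := KiteGeo.vertex_not_interior K
  simp only [Set.mem_insert_iff, Set.mem_singleton_iff] at hw
  rcases hw with rfl | rfl | rfl | rfl
  · exact h1 hin
  · exact h2 hin
  · exact h3 hin
  · exact h4 hin

/-- Step lemma: a neighbour of an interior vertex along an uncrossed edge is inside
or a kite vertex. -/
lemma inside_step (hgood : ∀ e ∈ G.edgeSet, ∀ v : V, D.pos v ∈ D.seg e → v ∈ e)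
    {a b c d : V} (hK : D.IsKite a b c d) {v u : V}
    (hv : D.InsideKite a b c d v) (he : s(v, u) ∈ G.edgeSet)
    (hunc : D.Uncrossed s(v, u)) :
    D.InsideKite a b c d u ∨ u ∈ ({a, b, c, d} : Set V) := by
  by_cases hu : D.InsideKite a b c d u
  · exact Or.inl hu
  right
  have hK0 := hK
  obtain ⟨e1, e2, e3, e4, e5, e6, hcr, u1, u2, u3, u4⟩ := hK0
  unfold InsideKite at hv hu
  rw [D.image_quad] at hv hu
  obtain ⟨s, t, K⟩ := D.kite_cfg hK ⟨_, hv⟩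
  set Q : Set (ℝ × ℝ) := convexHull ℝ
    ({D.pos a, D.pos b, D.pos c, D.pos d} : Set (ℝ × ℝ)) with hQ
  have hQclosed : IsClosed Q :=
    (((Set.finite_singleton (D.pos d)).insert (D.pos c) |>.insert (D.pos b)
      |>.insert (D.pos a)).isCompact_convexHull ℝ).isClosed
  obtain ⟨q, hqseg, hqf⟩ := KiteGeo.segment_meets_frontier hQclosed hv hu
  have hqni : q ∉ interior Q := by
    rw [hQclosed.frontier_eq] at hqf
    exact hqf.2
  have hqsides := KiteGeo.frontier_subset_sides K hqf
  have hqe : q ∈ D.seg s(v, u) := by rw [D.seg_eq]; exact hqseg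
  -- the generic side argument
  have main : ∀ x y : V, x ∈ ({a, b, c, d} : Set V) → y ∈ ({a, b, c, d} : Set V) →
      s(x, y) ∈ G.edgeSet → D.Uncrossed s(x, y) →
      q ∈ segment ℝ (D.pos x) (D.pos y) → u ∈ ({a, b, c, d} : Set V) := by
    intro x y hx hy hxye hxyunc hqxy
    have hqxy' : q ∈ D.seg s(x, y) := by rw [D.seg_eq]; exact hqxy
    by_cases hqvert : ∃ w : V, q = D.pos w
    · obtain ⟨w, rfl⟩ := hqvert
      have hw : w ∈ s(v, u) := hgood _ he w hqe
      rw [Sym2.mem_iff] at hw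
      rcases hw with rfl | rfl
      · exact absurd hv hqni
      · have : w ∈ s(x, y) := hgood _ hxye w hqxy'
        rw [Sym2.mem_iff] at this
        rcases this with rfl | rfl
        · exact hx
        · exact hy
    · push_neg at hqvert
      by_cases heq : s(x, y) = s(v, u)
      · exfalso
        have hvxy : v ∈ s(x, y) := by rw [heq]; simp
        rw [Sym2.mem_iff] at hvxy
        obtain ⟨h1, h2, h3, h4⟩ := KiteGeo.vertex_not_interior K
        simp only [Set.mem_insert_iff, Set.mem_singleton_iff] at hx hy
        rcases hvxy with rfl | rfl
        · rcases hx with rfl | rfl | rfl | rfl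
          · exact h1 hv
          · exact h2 hv
          · exact h3 hv
          · exact h4 hv
        · rcases hy with rfl | rfl | rfl | rfl
          · exact h1 hv
          · exact h2 hv
          · exact h3 hv
          · exact h4 hv
      · exact absurd ⟨heq, q, hqxy', hqe, hqvert⟩ (hxyunc s(v, u) he)
  rcases hqsides with ((h | h) | h) | h
  · exact main a b (by simp) (by simp) e1 u1 h
  · exact main b c (by simp) (by simp) e2 u2 h
  · exact main c d (by simp) (by simp) e3 u3 h
  · exact main d a (by simp) (by simp) e4 u4 h

end SLDrawing



namespace SLDrawing

variable {V : Type} {G : SimpleGraph V} (D : SLDrawing V G)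

/-- If both endpoints of a crossed diagonal of kite `abcd` are vertices of kite
`a'b'c'd'` while `a` is strictly inside the latter, we get a contradiction. -/
lemma both_diag_vertices_absurd
    (hP1 : ∀ e ∈ G.edgeSet, {f : Sym2 V | f ∈ G.edgeSet ∧ D.Crosses e f}.Subsingleton)
    {a b c d a' b' c' d' : V} (hK : D.IsKite a b c d) (hK' : D.IsKite a' b' c' d')
    (ha : D.InsideKite a' b' c' d' a)
    (hb : b ∈ ({a', b', c', d'} : Set V)) (hd : d ∈ ({a', b', c', d'} : Set V)) :
    False := by
  obtain ⟨e1, e2, e3, e4, e5, e6, hcr, u1, u2, u3, u4⟩ := hK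
  obtain ⟨e1', e2', e3', e4', e5', e6', hcr', u1', u2', u3', u4'⟩ := hK'
  have hbd : b ≠ d := (G.mem_edgeSet.mp e6).ne
  have hcrbd : D.Crosses s(b, d) s(a, c) := D.crosses_symm hcr
  -- cases on which pair (b,d) is among vertices of K'
  have hside : ∀ x y : V, s(b, d) = s(x, y) → D.Uncrossed s(x, y) → False := by
    intro x y hxy hu
    rw [hxy] at hcrbd
    exact hu s(a, c) e5 hcrbd
  have hnotinA : a ∉ ({a', b', c', d'} : Set V) := by
    intro h
    exact D.vertex_not_inside ⟨e1', e2', e3', e4', e5', e6', hcr', u1', u2', u3', u4'⟩ h ha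
  have hdiagAC : s(b, d) = s(a', c') → False := by
    intro hxy
    have hsub := hP1 s(a', c') e5'
    have m1 : s(b', d') ∈ {f : Sym2 V | f ∈ G.edgeSet ∧ D.Crosses s(a', c') f} := ⟨e6', hcr'⟩
    have m2 : s(a, c) ∈ {f : Sym2 V | f ∈ G.edgeSet ∧ D.Crosses s(a', c') f} := by
      refine ⟨e5, ?_⟩
      rw [← hxy]
      exact hcrbd
    have heq := hsub m2 m1
    rw [Sym2.eq_iff] at heq
    apply hnotinA
    rcases heq with ⟨rfl, rfl⟩ | ⟨rfl, rfl⟩ <;> simp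
  have hdiagBD : s(b, d) = s(b', d') → False := by
    intro hxy
    have hsub := hP1 s(b', d') e6'
    have m1 : s(a', c') ∈ {f : Sym2 V | f ∈ G.edgeSet ∧ D.Crosses s(b', d') f} :=
      ⟨e5', D.crosses_symm hcr'⟩
    have m2 : s(a, c) ∈ {f : Sym2 V | f ∈ G.edgeSet ∧ D.Crosses s(b', d') f} := by
      refine ⟨e5, ?_⟩
      rw [← hxy]
      exact hcrbd
    have heq := hsub m2 m1
    rw [Sym2.eq_iff] at heq
    apply hnotinA
    rcases heq with ⟨rfl, rfl⟩ | ⟨rfl, rfl⟩ <;> simp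
  simp only [Set.mem_insert_iff, Set.mem_singleton_iff] at hb hd
  rcases hb with rfl | rfl | rfl | rfl <;> rcases hd with rfl | rfl | rfl | rfl
  · exact hbd rfl
  · exact hside b d rfl u1'
  · exact hdiagAC rfl
  · exact hside d b Sym2.eq_swap u4'
  · exact hside d b Sym2.eq_swap u1'
  · exact hbd rfl
  · exact hside b d rfl u2'
  · exact hdiagBD rfl
  · exact hdiagAC (by rw [Sym2.eq_swap])
  · exact hside d b Sym2.eq_swap u2'
  · exact hbd rfl
  · exact hside b d rfl u3'
  · exact hside b d rfl u4'
  · exact hdiagBD (by rw [Sym2.eq_swap])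
  · exact hside d b Sym2.eq_swap u3'
  · exact hbd rfl

end SLDrawing



namespace SLDrawing

variable {V : Type} {G : SimpleGraph V} (D : SLDrawing V G)

lemma inside_all (hgood : ∀ e ∈ G.edgeSet, ∀ v : V, D.pos v ∈ D.seg e → v ∈ e)
    (hP1 : ∀ e ∈ G.edgeSet, {f : Sym2 V | f ∈ G.edgeSet ∧ D.Crosses e f}.Subsingleton)
    (hP3 : ∀ a b c d : V, D.IsKite a b c d → ∀ y ∈ ({a, b, c, d} : Set V), ∀ x : V,
      D.InsideKite a b c d x → s(y, x) ∈ G.edgeSet → D.Uncrossed s(y, x))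
    {a b c d a' b' c' d' : V} (hK : D.IsKite a b c d) (hK' : D.IsKite a' b' c' d')
    (ha : D.InsideKite a' b' c' d' a) :
    D.InsideKite a' b' c' d' b ∧ D.InsideKite a' b' c' d' c ∧
      D.InsideKite a' b' c' d' d := by
  have hK0 := hK
  obtain ⟨e1, e2, e3, e4, e5, e6, hcr, u1, u2, u3, u4⟩ := hK0
  have ncd1 : ¬ D.Uncrossed s(a, c) := fun h => h s(b, d) e6 hcr
  have ncd2 : ¬ D.Uncrossed s(b, d) := fun h => h s(a, c) e5 (D.crosses_symm hcr)
  have hb := D.inside_step hgood hK' ha e1 u1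
  have hd := D.inside_step hgood hK' ha
    (show s(a, d) ∈ G.edgeSet by rw [Sym2.eq_swap]; exact e4)
    (show D.Uncrossed s(a, d) by rw [Sym2.eq_swap]; exact u4)
  have hbd : b ∈ ({a', b', c', d'} : Set V) → d ∈ ({a', b', c', d'} : Set V) → False :=
    fun h1 h2 => D.both_diag_vertices_absurd hP1 hK hK' ha h1 h2
  have hc : D.InsideKite a' b' c' d' c ∨ c ∈ ({a', b', c', d'} : Set V) := by
    rcases hb with hSb | hTb
    · exact D.inside_step hgood hK' hSb e2 u2
    · rcases hd with hSd | hTd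
      · exact D.inside_step hgood hK' hSd
          (show s(d, c) ∈ G.edgeSet by rw [Sym2.eq_swap]; exact e3)
          (show D.Uncrossed s(d, c) by rw [Sym2.eq_swap]; exact u3)
      · exact (hbd hTb hTd).elim
  have hSc : D.InsideKite a' b' c' d' c := by
    rcases hc with h | h
    · exact h
    · exfalso
      have hbind := hP3 a' b' c' d' hK' c h a ha
        (show s(c, a) ∈ G.edgeSet by rw [Sym2.eq_swap]; exact e5)
      rw [Sym2.eq_swap] at hbind
      exact ncd1 hbind
  have hSb : D.InsideKite a' b' c' d' b := by
    rcases hb with h | h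
    · exact h
    · exfalso
      rcases hd with hSd | hTd
      · exact ncd2 (hP3 a' b' c' d' hK' b h d hSd e6)
      · exact hbd h hTd
  have hSd : D.InsideKite a' b' c' d' d := by
    rcases hd with h | h
    · exact h
    · exfalso
      have hbind := hP3 a' b' c' d' hK' d h b hSb
        (show s(d, b) ∈ G.edgeSet by rw [Sym2.eq_swap]; exact e6)
      rw [Sym2.eq_swap] at hbind
      exact ncd2 hbind
  exact ⟨hSb, hSc, hSd⟩

lemma inside_of_mem (hgood : ∀ e ∈ G.edgeSet, ∀ v : V, D.pos v ∈ D.seg e → v ∈ e)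
    (hP1 : ∀ e ∈ G.edgeSet, {f : Sym2 V | f ∈ G.edgeSet ∧ D.Crosses e f}.Subsingleton)
    (hP3 : ∀ a b c d : V, D.IsKite a b c d → ∀ y ∈ ({a, b, c, d} : Set V), ∀ x : V,
      D.InsideKite a b c d x → s(y, x) ∈ G.edgeSet → D.Uncrossed s(y, x))
    {a b c d a' b' c' d' : V} (hK : D.IsKite a b c d) (hK' : D.IsKite a' b' c' d')
    {x : V} (hx : x ∈ ({a, b, c, d} : Set V)) (hin : D.InsideKite a' b' c' d' x) :
    ∀ y ∈ ({a, b, c, d} : Set V), D.InsideKite a' b' c' d' y := by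
  intro y hy
  simp only [Set.mem_insert_iff, Set.mem_singleton_iff] at hx hy
  rcases hx with rfl | rfl | rfl | rfl
  · obtain ⟨h2, h3, h4⟩ := D.inside_all hgood hP1 hP3 hK hK' hin
    rcases hy with rfl | rfl | rfl | rfl <;> assumption
  · obtain ⟨h2, h3, h4⟩ := D.inside_all hgood hP1 hP3 (D.kite_rot hK) hK' hin
    rcases hy with rfl | rfl | rfl | rfl <;> assumption
  · obtain ⟨h2, h3, h4⟩ :=
      D.inside_all hgood hP1 hP3 (D.kite_rot (D.kite_rot hK)) hK' hin
    rcases hy with rfl | rfl | rfl | rfl <;> assumption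
  · obtain ⟨h2, h3, h4⟩ :=
      D.inside_all hgood hP1 hP3 (D.kite_rot (D.kite_rot (D.kite_rot hK))) hK' hin
    rcases hy with rfl | rfl | rfl | rfl <;> assumption

end SLDrawing


/-- If two vertices belong to the same kite of a 1-kite-planar drawing, then they are of the
same level.  Here `lvl` is the level function of the drawing: `lvl v = 0` if no kite
contains `v`, and `lvl v = i > 0` if the maximum level of the vertices belonging to a kite
containing `v` is `i - 1`; the drawing is 1-kite-planar: every edge is crossed at most once
(P.1), kite edges are uncrossed (P.2, built into `IsKite`), and every binding edge is
uncrossed (P.3). -/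
theorem kite_vertices_same_level {V : Type} [Fintype V]
    (G : SimpleGraph V) (D : SLDrawing V G)
    (hgood : ∀ e ∈ G.edgeSet, ∀ v : V, D.pos v ∈ D.seg e → v ∈ e)
    -- P.1: every edge is crossed at most once
    (hP1 : ∀ e ∈ G.edgeSet, {f : Sym2 V | f ∈ G.edgeSet ∧ D.Crosses e f}.Subsingleton)
    -- P.3: every binding edge is uncrossed
    (hP3 : ∀ a b c d : V, D.IsKite a b c d → ∀ y ∈ ({a, b, c, d} : Set V), ∀ x : V,
      D.InsideKite a b c d x → s(y, x) ∈ G.edgeSet → D.Uncrossed s(y, x))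
    -- the level function
    (lvl : V → ℕ)
    (hlvl0 : ∀ v : V, (¬ ∃ a b c d : V, D.IsKite a b c d ∧ D.InsideKite a b c d v) →
      lvl v = 0)
    (hlvl_lt : ∀ (v a b c d : V), D.IsKite a b c d → D.InsideKite a b c d v →
      ∀ w ∈ ({a, b, c, d} : Set V), lvl w < lvl v)
    (hlvl_max : ∀ v : V, (∃ a b c d : V, D.IsKite a b c d ∧ D.InsideKite a b c d v) →
      ∃ a b c d : V, D.IsKite a b c d ∧ D.InsideKite a b c d v ∧
        ∃ w ∈ ({a, b, c, d} : Set V), lvl v = lvl w + 1) :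
    ∀ a b c d : V, D.IsKite a b c d →
      ∀ x ∈ ({a, b, c, d} : Set V), ∀ y ∈ ({a, b, c, d} : Set V), lvl x = lvl y := by
  have aux : ∀ a b c d : V, D.IsKite a b c d →
      ∀ x ∈ ({a, b, c, d} : Set V), ∀ y ∈ ({a, b, c, d} : Set V),
        lvl x < lvl y → False := by
    intro a b c d hK x hx y hy hlt
    have h1 : ∃ a' b' c' d' : V, D.IsKite a' b' c' d' ∧ D.InsideKite a' b' c' d' y := by
      by_contra h
      rw [hlvl0 y h] at hlt
      omega
    obtain ⟨a', b', c', d', hK', hy', w, hw, hmax⟩ := hlvl_max y h1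
    have hx' : D.InsideKite a' b' c' d' x :=
      D.inside_of_mem hgood hP1 hP3 hK hK' hy hy' x hx
    have := hlvl_lt x a' b' c' d' hK' hx' w hw
    omega
  intro a b c d hK x hx y hy
  rcases lt_trichotomy (lvl x) (lvl y) with h | h | h
  · exact absurd h (fun h => aux a b c d hK x hx y hy h)
  · exact h
  · exact absurd h (fun h => aux a b c d hK y hy x hx h)
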